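/- arXiv:1309.1771 — 2 statements merged into one kernel-verified Lean document; each statement's English description precedes it below -/
import Mathlib

section
/- Let C_{α,β} be a connected 1-dimensional simplicial even walk and let G be the simple graph whose edges are the facets occurring in C_{α,β}. Then every vertex of G has degree at least 2. -/
open Finset

/-- The `α`-degree of a vertex `x`. -/
def walkDeg {V : Type*} [DecidableEq V] {q s : ℕ} (F : Fin q → Finset V)
    (α : Fin s → Fin q) (x : V) : ℕ :=
  (Finset.univ.filter fun t : Fin s => x ∈ F (α t)).card

/-- Simplicial even walk `C_{α,β}`. -/
def IsEvenWalk {V : Type*} [DecidableEq V] {q s : ℕ} (F : Fin q → Finset V)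
    (α β : Fin s → Fin q) : Prop :=
  2 ≤ s ∧ Disjoint (Set.range α) (Set.range β) ∧
    ∀ i ∈ Set.range α, ∀ j ∈ Set.range β,
      ¬ (↑(F i \ F j) ⊆ {x : V | walkDeg F β x < walkDeg F α x}) ∧
      ¬ (↑(F j \ F i) ⊆ {x : V | walkDeg F α x < walkDeg F β x})

/-- The vertex set of the even walk `C_{α,β}`. -/
def walkVerts {V : Type*} [DecidableEq V] {q s : ℕ} (F : Fin q → Finset V)
    (α β : Fin s → Fin q) : Finset V :=
  Finset.univ.biUnion fun t : Fin s => F (α t) ∪ F (β t)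

/-- Two vertices are adjacent in (the graph formed by the facets of) `C_{α,β}`. -/
def walkAdj {V : Type*} [DecidableEq V] {q s : ℕ} (F : Fin q → Finset V)
    (α β : Fin s → Fin q) (u v : V) : Prop :=
  u ≠ v ∧ ∃ t : Fin s,
    (u ∈ F (α t) ∧ v ∈ F (α t)) ∨ (u ∈ F (β t) ∧ v ∈ F (β t))

/-- The set of (distinct) facets occurring in `C_{α,β}`: the edge set of the
graph `G` formed by the walk. -/
def walkEdges {V : Type*} [DecidableEq V] {q s : ℕ} (F : Fin q → Finset V)
    (α β : Fin s → Fin q) : Finset (Finset V) :=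
  (Finset.univ.image fun t : Fin s => F (α t)) ∪
    (Finset.univ.image fun t : Fin s => F (β t))

lemma walkDeg_pos {V : Type*} [DecidableEq V] {q s : ℕ} (e : Fin q → Finset V)
    (α : Fin s → Fin q) {x : V} {t : Fin s} (hx : x ∈ e (α t)) :
    0 < walkDeg e α x :=
  Finset.card_pos.mpr ⟨t, Finset.mem_filter.mpr ⟨Finset.mem_univ _, hx⟩⟩

lemma aux_even {V : Type*} [DecidableEq V] {q s : ℕ} (e : Fin q → Finset V)
    (hcard : ∀ i, (e i).card = 2) (α β : Fin s → Fin q) (t₀ : Fin s)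
    (hcond : ∀ j ∈ Set.range β,
      ¬ (↑(e (α t₀) \ e j) ⊆
        {x : V | walkDeg e β x < walkDeg e α x}))
    {v : V} (hv : v ∈ e (α t₀))
    (hvb : ∀ t, v ∉ e (β t)) : False := by
  have hvβ : walkDeg e β v = 0 := by
    simp only [walkDeg, Finset.card_eq_zero, Finset.filter_eq_empty_iff]
    intro t _; exact hvb t
  have hvα : 0 < walkDeg e α v := walkDeg_pos e α hv
  -- first application: get the other vertex z
  obtain ⟨z, hz, hznot⟩ := Set.not_subset.mp (hcond (β t₀) ⟨t₀, rfl⟩)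
  rw [Finset.coe_sdiff] at hz
  obtain ⟨hz1, hz2⟩ := hz
  rw [Finset.mem_coe] at hz1
  rw [Finset.mem_coe] at hz2
  simp only [Set.mem_setOf_eq, not_lt] at hznot
  have hzv : z ≠ v := by
    intro hzv; rw [hzv, hvβ] at hznot; omega
  have hzα : 0 < walkDeg e α z := walkDeg_pos e α hz1
  have hzβ : 0 < walkDeg e β z := lt_of_lt_of_le hzα hznot
  obtain ⟨t₂, ht₂⟩ := Finset.card_pos.mp hzβ
  have ht₂' : z ∈ e (β t₂) := (Finset.mem_filter.mp ht₂).2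
  -- second application at j = β t₂
  obtain ⟨w, hw, hwnot⟩ := Set.not_subset.mp (hcond (β t₂) ⟨t₂, rfl⟩)
  rw [Finset.coe_sdiff] at hw
  obtain ⟨hw1, hw2⟩ := hw
  rw [Finset.mem_coe] at hw1
  rw [Finset.mem_coe] at hw2
  simp only [Set.mem_setOf_eq, not_lt] at hwnot
  have hwv : w ≠ v := by
    intro hwv; rw [hwv, hvβ] at hwnot; omega
  -- card 2 forces w = z
  obtain ⟨a, b, hab, hE⟩ := Finset.card_eq_two.mp (hcard (α t₀))
  rw [hE] at hv hz1 hw1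
  simp only [Finset.mem_insert, Finset.mem_singleton] at hv hz1 hw1
  have hwz : w = z := by
    rcases hv with hv | hv <;> rcases hz1 with hz1 | hz1 <;>
      rcases hw1 with hw1 | hw1 <;> simp_all
  rw [hwz] at hw2
  exact hw2 ht₂'

theorem stmt10 {V : Type*} [DecidableEq V] {q s : ℕ} (e : Fin q → Finset V)
    (hcard : ∀ i, (e i).card = 2) (hinj : Function.Injective e)
    (α β : Fin s → Fin q) (h : IsEvenWalk e α β)
    (hconn : ∀ u v : V, u ∈ walkVerts e α β → v ∈ walkVerts e α β →
        Relation.ReflTransGen (walkAdj e α β) u v) :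
    ∀ v ∈ walkVerts e α β,
      2 ≤ ((walkEdges e α β).filter fun E => v ∈ E).card := by
  intro v hv
  by_contra hlt
  push_neg at hlt
  have hle : ((walkEdges e α β).filter fun E => v ∈ E).card ≤ 1 := by omega
  have huniq : ∀ E₁ ∈ (walkEdges e α β).filter (fun E => v ∈ E),
      ∀ E₂ ∈ (walkEdges e α β).filter (fun E => v ∈ E), E₁ = E₂ :=
    Finset.card_le_one.mp hle
  have hmemα : ∀ t : Fin s, e (α t) ∈ walkEdges e α β := fun t =>
    Finset.mem_union_left _ (Finset.mem_image.mpr ⟨t, Finset.mem_univ _, rfl⟩)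
  have hmemβ : ∀ t : Fin s, e (β t) ∈ walkEdges e α β := fun t =>
    Finset.mem_union_right _ (Finset.mem_image.mpr ⟨t, Finset.mem_univ _, rfl⟩)
  obtain ⟨hs, hdisj, hcond⟩ := h
  simp only [walkVerts, Finset.mem_biUnion, Finset.mem_union,
    Finset.mem_univ, true_and] at hv
  obtain ⟨t₀, hv | hv⟩ := hv
  · -- v ∈ e (α t₀); show v is in no β-edge
    have hvb : ∀ t, v ∉ e (β t) := by
      intro t ht
      have heq : e (α t₀) = e (β t) :=
        huniq _ (Finset.mem_filter.mpr ⟨hmemα t₀, hv⟩) _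
          (Finset.mem_filter.mpr ⟨hmemβ t, ht⟩)
      exact Set.disjoint_left.mp hdisj ⟨t₀, rfl⟩ ⟨t, (hinj heq).symm⟩
    exact aux_even e hcard α β t₀
      (fun j hj => (hcond (α t₀) ⟨t₀, rfl⟩ j hj).1) hv hvb
  · -- v ∈ e (β t₀); symmetric
    have hva : ∀ t, v ∉ e (α t) := by
      intro t ht
      have heq : e (β t₀) = e (α t) :=
        huniq _ (Finset.mem_filter.mpr ⟨hmemβ t₀, hv⟩) _
          (Finset.mem_filter.mpr ⟨hmemα t, ht⟩)
      exact Set.disjoint_left.mp hdisj ⟨t, rfl⟩ ⟨t₀, hinj heq⟩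
    exact aux_even e hcard β α t₀
      (fun j hj => (hcond j hj (β t₀) ⟨t₀, rfl⟩).2) hv hva
end

section
/- Let Δ be a simplicial complex and suppose its line graph L(Δ) contains no cycle of even length. Then the facet ideal F(Δ) is of linear type. -/
open Finset MvPolynomial

/-- Successor modulo `m` on `Fin m`. -/
def cyclicNext {m : ℕ} (i : Fin m) : Fin m := ⟨(i.val + 1) % m, Nat.mod_lt _ i.pos⟩

/-- The facets of a simplicial complex: each is nonempty, and none contains another. -/
def IsFacetFamily {V : Type*} [DecidableEq V] {q : ℕ} (F : Fin q → Finset V) : Prop :=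
  (∀ i, (F i).Nonempty) ∧ ∀ i j : Fin q, F i ⊆ F j → i = j

/-- The squarefree monomial `f_i = ∏_{x ∈ F_i} x` of a facet `F_i`. -/
noncomputable def facetMonomial (K : Type*) [Field K] {n q : ℕ}
    (F : Fin q → Finset (Fin n)) (i : Fin q) : MvPolynomial (Fin n) K :=
  ∏ x ∈ F i, X x

/-- The `R`-algebra map `ψ : S = R[T_1,…,T_q] → R[t]`, `T_i ↦ f_i·t`. -/
noncomputable def reesHom (K : Type*) [Field K] {n q : ℕ} (F : Fin q → Finset (Fin n)) :
    MvPolynomial (Fin q) (MvPolynomial (Fin n) K) →ₐ[MvPolynomial (Fin n) K]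
      Polynomial (MvPolynomial (Fin n) K) :=
  aeval fun i : Fin q => Polynomial.C (facetMonomial K F i) * Polynomial.X

/-- The defining ideal `J = ker ψ` of the Rees algebra `R[It]`. -/
noncomputable def reesIdeal (K : Type*) [Field K] {n q : ℕ} (F : Fin q → Finset (Fin n)) :
    Ideal (MvPolynomial (Fin q) (MvPolynomial (Fin n) K)) :=
  RingHom.ker (reesHom K F)

/-- The ideal generated by the facet monomials is of linear type: its Rees ideal `J`
is generated by its elements that are homogeneous of degree `1` in `T_1,…,T_q`. -/
def IsLinearType (K : Type*) [Field K] {n q : ℕ} (F : Fin q → Finset (Fin n)) : Prop :=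
  reesIdeal K F = Ideal.span {g | g ∈ reesIdeal K F ∧ g.IsHomogeneous 1}

section Aux

variable {K : Type*} [Field K] {n q : ℕ} (F : Fin q → Finset (Fin n))

/-- indicator Finsupp of a finset -/
noncomputable def sfInd (s : Finset (Fin n)) : Fin n →₀ ℕ := ∑ x ∈ s, Finsupp.single x 1

lemma sfInd_apply (s : Finset (Fin n)) (x : Fin n) :
    sfInd s x = if x ∈ s then 1 else 0 := by
  classical
  simp only [sfInd, Finsupp.finset_sum_apply, Finsupp.single_apply]
  rw [Finset.sum_ite_eq' s x (fun _ => 1)]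

/-- exponent vector of f^b -/
noncomputable def sfG (b : Fin q →₀ ℕ) : Fin n →₀ ℕ := ∑ i : Fin q, b i • sfInd (F i)

/-- total degree in T variables -/
def sfDeg (b : Fin q →₀ ℕ) : ℕ := ∑ i : Fin q, b i

lemma prod_monomial_one {σ τ : Type*} (s : Finset τ) (g : τ → (σ →₀ ℕ)) :
    (∏ t ∈ s, (monomial (g t) (1 : K))) = monomial (∑ t ∈ s, g t) 1 := by
  classical
  induction s using Finset.cons_induction with
  | empty => simp
  | cons a s ha ih => rw [Finset.prod_cons, ih, Finset.sum_cons, monomial_mul, one_mul]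

lemma facetMonomial_eq (i : Fin q) :
    facetMonomial K F i = monomial (sfInd (F i)) 1 := by
  rw [facetMonomial, sfInd, ← prod_monomial_one]
  exact Finset.prod_congr rfl fun x _ => by rw [← X_pow_eq_monomial, pow_one]

lemma fpow_eq (b : Fin q →₀ ℕ) :
    (∏ i : Fin q, (facetMonomial K F i) ^ (b i)) = monomial (sfG F b) (1 : K) := by
  rw [sfG, ← prod_monomial_one]
  refine Finset.prod_congr rfl fun i _ => ?_
  rw [facetMonomial_eq, monomial_pow, one_pow]

lemma reesHom_monomial (b : Fin q →₀ ℕ) (r : MvPolynomial (Fin n) K) :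
    reesHom K F (monomial b r) =
      Polynomial.C (r * monomial (sfG F b) 1) * Polynomial.X ^ (sfDeg b) := by
  rw [reesHom, aeval_monomial]
  have h1 : (b.prod fun i k => (Polynomial.C (facetMonomial K F i) * Polynomial.X) ^ k)
      = ∏ i : Fin q, (Polynomial.C (facetMonomial K F i) * Polynomial.X) ^ (b i) :=
    Finsupp.prod_fintype _ _ fun i => pow_zero _
  rw [h1]
  have h2 : ∀ i : Fin q, (Polynomial.C (facetMonomial K F i) * Polynomial.X) ^ (b i)
      = Polynomial.C ((facetMonomial K F i) ^ (b i)) * Polynomial.X ^ (b i) := by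
    intro i; rw [mul_pow, ← map_pow]
  rw [Finset.prod_congr rfl fun i _ => h2 i, Finset.prod_mul_distrib, ← map_prod,
    fpow_eq, Finset.prod_pow_eq_pow_sum]
  have halg : algebraMap (MvPolynomial (Fin n) K) (Polynomial (MvPolynomial (Fin n) K)) r
      = Polynomial.C r := rfl
  rw [halg, sfDeg, map_mul, ← mul_assoc]

lemma sfG_add (b c : Fin q →₀ ℕ) : sfG F (b + c) = sfG F b + sfG F c := by
  rw [sfG, sfG, sfG, ← Finset.sum_add_distrib]
  exact Finset.sum_congr rfl fun i _ => by rw [Finsupp.add_apply, add_smul]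

lemma sfG_single (i : Fin q) : sfG F (Finsupp.single i 1) = sfInd (F i) := by
  rw [sfG]
  rw [Finset.sum_eq_single i]
  · simp
  · intro j _ hj; rw [Finsupp.single_apply, if_neg (Ne.symm hj), zero_smul]
  · simp

lemma sfDeg_add (b c : Fin q →₀ ℕ) : sfDeg (b + c) = sfDeg b + sfDeg c := by
  rw [sfDeg, sfDeg, sfDeg, ← Finset.sum_add_distrib]
  exact Finset.sum_congr rfl fun i _ => rfl

lemma sfDeg_single (i : Fin q) : sfDeg (Finsupp.single i 1) = 1 := by
  rw [sfDeg, Finset.sum_eq_single i] <;> simp [Finsupp.single_apply]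
  intro j h; exact fun h' => absurd h'.symm h

lemma sfDeg_eq_zero {b : Fin q →₀ ℕ} (h : sfDeg b = 0) : b = 0 := by
  rw [sfDeg, Finset.sum_eq_zero_iff] at h
  ext i; exact h i (Finset.mem_univ i)

lemma sfG_pos {b : Fin q →₀ ℕ} {i : Fin q} {x : Fin n} (hi : i ∈ b.support)
    (hx : x ∈ F i) : 1 ≤ sfG F b x := by
  rw [sfG, Finsupp.finset_sum_apply]
  have h1 : 1 ≤ (b i • sfInd (F i)) x := by
    rw [Finsupp.smul_apply, sfInd_apply, if_pos hx, smul_eq_mul, mul_one]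
    exact Nat.one_le_iff_ne_zero.2 (Finsupp.mem_support_iff.1 hi)
  calc 1 ≤ (b i • sfInd (F i)) x := h1
    _ ≤ _ := Finset.single_le_sum (f := fun j => (b j • sfInd (F j)) x)
        (fun j _ => Nat.zero_le _) (Finset.mem_univ i)

lemma exists_of_sfG_pos {b : Fin q →₀ ℕ} {x : Fin n} (h : 1 ≤ sfG F b x) :
    ∃ i ∈ b.support, x ∈ F i := by
  rw [sfG, Finsupp.finset_sum_apply] at h
  obtain ⟨i, -, hi⟩ := Finset.exists_ne_zero_of_sum_ne_zero (by omega : ∑ i : Fin q, (b i • sfInd (F i)) x ≠ 0)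
  rw [Finsupp.smul_apply, sfInd_apply, smul_eq_mul] at hi
  refine ⟨i, Finsupp.mem_support_iff.2 ?_, ?_⟩
  · intro h0; rw [h0, zero_mul] at hi; exact hi rfl
  · by_contra hx; rw [if_neg hx, mul_zero] at hi; exact hi rfl

lemma star_lemma
    (hnoevencycle : ¬ ∃ (m : ℕ) (v : Fin m → Fin q), 3 ≤ m ∧ Even m ∧
        Function.Injective v ∧
        ∀ t : Fin m, v t ≠ v (cyclicNext t) ∧
          (F (v t) ∩ F (v (cyclicNext t))).Nonempty)
    {b b' : Fin q →₀ ℕ} (hb : b.support.Nonempty) (hb' : b'.support.Nonempty)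
    (hdisj : Disjoint b.support b'.support) {a a' : Fin n →₀ ℕ}
    (heq : a + sfG F b = a' + sfG F b') :
    (∃ i ∈ b.support, ∃ j ∈ b'.support, ∀ x ∈ F j, x ∈ F i ∨ x ∈ a.support) ∨
    (∃ j ∈ b'.support, ∃ i ∈ b.support, ∀ x ∈ F i, x ∈ F j ∨ x ∈ a'.support) := by
  classical
  by_contra hcon
  push_neg at hcon
  obtain ⟨H1, H2⟩ := hcon
  -- transfer lemmas
  have tr1 : ∀ {x : Fin n} {i : Fin q}, i ∈ b.support → x ∈ F i → x ∉ a'.support →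
      ∃ j ∈ b'.support, x ∈ F j := by
    intro x i hi hx hxa'
    apply exists_of_sfG_pos F
    have h1 : 1 ≤ (a + sfG F b) x := le_trans (sfG_pos F hi hx) (by
      rw [Finsupp.add_apply]; omega)
    rw [heq, Finsupp.add_apply] at h1
    have : a' x = 0 := Finsupp.notMem_support_iff.1 hxa'
    omega
  have tr2 : ∀ {x : Fin n} {j : Fin q}, j ∈ b'.support → x ∈ F j → x ∉ a.support →
      ∃ i ∈ b.support, x ∈ F i := by
    intro x j hj hx hxa
    apply exists_of_sfG_pos F
    have h1 : 1 ≤ (a' + sfG F b') x := le_trans (sfG_pos F hj hx) (by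
      rw [Finsupp.add_apply]; omega)
    rw [← heq, Finsupp.add_apply] at h1
    have : a x = 0 := Finsupp.notMem_support_iff.1 hxa
    omega
  -- the step
  have hstep0 : ∀ t : {p : Fin q × Fin q // p.1 ∈ b.support ∧ p.2 ∈ b'.support},
      ∃ t' : {p : Fin q × Fin q // p.1 ∈ b.support ∧ p.2 ∈ b'.support},
        t'.1.2 ≠ t.1.2 ∧ t'.1.1 ≠ t.1.1 ∧ (F t.1.1 ∩ F t'.1.2).Nonempty ∧
          (F t'.1.1 ∩ F t'.1.2).Nonempty := by
    rintro ⟨⟨i, j⟩, hi, hj⟩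
    obtain ⟨y, hyFi, hyFj, hya'⟩ := H2 j hj i hi
    obtain ⟨j', hj', hyFj'⟩ := tr1 hi hyFi hya'
    obtain ⟨x, hxFj', hxFi, hxa⟩ := H1 i hi j' hj'
    obtain ⟨i', hi', hxFi'⟩ := tr2 hj' hxFj' hxa
    refine ⟨⟨(i', j'), hi', hj'⟩, ?_, ?_, ⟨y, Finset.mem_inter.2 ⟨hyFi, hyFj'⟩⟩,
      ⟨x, Finset.mem_inter.2 ⟨hxFi', hxFj'⟩⟩⟩
    · show j' ≠ j
      intro e; exact hyFj (e ▸ hyFj')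
    · show i' ≠ i
      intro e; exact hxFi (e ▸ hxFi')
  choose step hstep1 hstep2 hstep3 hstep4 using hstep0
  set t0 : {p : Fin q × Fin q // p.1 ∈ b.support ∧ p.2 ∈ b'.support} :=
    ⟨(hb.choose, hb'.choose), hb.choose_spec, hb'.choose_spec⟩ with ht0
  set seq : ℕ → {p : Fin q × Fin q // p.1 ∈ b.support ∧ p.2 ∈ b'.support} :=
    fun k => step^[k] t0 with hseqdef
  have hseq : ∀ k, seq (k + 1) = step (seq k) := fun k =>
    Function.iterate_succ_apply' step k t0
  set V : ℕ → Fin q := fun u => if u % 2 = 0 then (seq (u / 2)).1.1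
    else (seq (u / 2 + 1)).1.2 with hV
  have hVe : ∀ k : ℕ, V (2 * k) = (seq k).1.1 := by
    intro k
    have h1 : (2 * k) % 2 = 0 := by omega
    have h2 : (2 * k) / 2 = k := by omega
    simp only [hV, if_pos h1, h2]
  have hVo : ∀ k : ℕ, V (2 * k + 1) = (seq (k + 1)).1.2 := by
    intro k
    have h1 : ¬ ((2 * k + 1) % 2 = 0) := by omega
    have h2 : (2 * k + 1) / 2 = k := by omega
    simp only [hV, if_neg h1, h2]
  have hVmem : ∀ u : ℕ, (u % 2 = 0 → V u ∈ b.support) ∧ (u % 2 ≠ 0 → V u ∈ b'.support) := by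
    intro u
    constructor
    · intro h; simp only [hV, if_pos h]; exact (seq (u / 2)).2.1
    · intro h; simp only [hV, if_neg h]; exact (seq (u / 2 + 1)).2.2
  have hedge : ∀ u : ℕ, (F (V u) ∩ F (V (u + 1))).Nonempty := by
    intro u
    rcases Nat.even_or_odd u with ⟨k, hk⟩ | ⟨k, hk⟩
    · obtain rfl : u = 2 * k := by omega
      rw [hVe k, show 2 * k + 1 = 2 * k + 1 from rfl, hVo k, hseq k]
      exact hstep3 (seq k)
    · obtain rfl : u = 2 * k + 1 := by omega
      rw [hVo k, show 2 * k + 1 + 1 = 2 * (k + 1) by ring, hVe (k + 1)]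
      obtain ⟨x, hx⟩ := hstep4 (seq k)
      rw [← hseq k] at hx
      rw [Finset.mem_inter] at hx
      exact ⟨x, Finset.mem_inter.2 ⟨hx.2, hx.1⟩⟩
  have hP2 : ∀ u : ℕ, V u ≠ V (u + 2) := by
    intro u
    rcases Nat.even_or_odd u with ⟨k, hk⟩ | ⟨k, hk⟩
    · obtain rfl : u = 2 * k := by omega
      rw [hVe k, show 2 * k + 2 = 2 * (k + 1) by ring, hVe (k + 1), hseq k]
      exact (hstep2 (seq k)).symm
    · obtain rfl : u = 2 * k + 1 := by omega
      rw [hVo k, show 2 * k + 1 + 2 = 2 * (k + 1) + 1 by ring, hVo (k + 1), hseq (k + 1)]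
      exact (hstep1 (seq (k + 1))).symm
  -- pigeonhole
  have hpig : ∃ x ∈ Finset.range (q + 1), ∃ y ∈ Finset.range (q + 1), x ≠ y ∧
      (seq x).1.1 = (seq y).1.1 := by
    apply Finset.exists_ne_map_eq_of_card_lt_of_maps_to
      (t := (Finset.univ : Finset (Fin q)))
    · simpa using Nat.lt_succ_self q
    · intro x _; exact Finset.mem_univ _
  obtain ⟨x, hx, y, hy, hxy, hgxy⟩ := hpig
  rw [Finset.mem_range] at hx hy
  set N := 2 * q + 4 with hN
  set Pairs := (Finset.range N ×ˢ Finset.range N).filter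
    (fun p : ℕ × ℕ => p.1 < p.2 ∧ V p.1 = V p.2) with hPairs
  have hPne : Pairs.Nonempty := by
    rcases Nat.lt_or_ge x y with hlt | hge
    · exact ⟨(2 * x, 2 * y), Finset.mem_filter.2 ⟨Finset.mem_product.2
        ⟨Finset.mem_range.2 (by omega), Finset.mem_range.2 (by omega)⟩,
        by omega, by rw [hVe, hVe]; exact hgxy⟩⟩
    · have hlt : y < x := by omega
      exact ⟨(2 * y, 2 * x), Finset.mem_filter.2 ⟨Finset.mem_product.2
        ⟨Finset.mem_range.2 (by omega), Finset.mem_range.2 (by omega)⟩,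
        by omega, by rw [hVe, hVe]; exact hgxy.symm⟩⟩
  obtain ⟨⟨s, t⟩, hmem, hmin⟩ := Finset.exists_min_image Pairs (fun p => p.2 - p.1) hPne
  rw [Finset.mem_filter, Finset.mem_product, Finset.mem_range, Finset.mem_range] at hmem
  obtain ⟨⟨hsN, htN⟩, hst, hVst⟩ := hmem
  set m := t - s with hm
  -- m is even
  have hmEven : m % 2 = 0 := by
    rcases eq_or_ne (s % 2) (t % 2) with hp | hp
    · omega
    · exfalso
      have hs2 := hVmem s
      have ht2 := hVmem t
      rcases eq_or_ne (s % 2) 0 with h0 | h0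
      · have h1 : V s ∈ b.support := hs2.1 h0
        have h2 : V t ∈ b'.support := ht2.2 (by omega)
        rw [hVst] at h1
        exact Finset.disjoint_left.1 hdisj h1 h2
      · have h1 : V s ∈ b'.support := hs2.2 h0
        have h2 : V t ∈ b.support := ht2.1 (by omega)
        rw [hVst] at h1
        exact Finset.disjoint_left.1 hdisj h2 h1
  have hmne2 : m ≠ 2 := by
    intro h2
    have : t = s + 2 := by omega
    exact hP2 s (by rw [← this]; exact hVst)
  have hm4 : 4 ≤ m := by omega
  -- the cycle
  set v : Fin m → Fin q := fun r => V (s + r.val) with hv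
  have hvlt : ∀ r1 r2 : Fin m, r1.val < r2.val → v r1 ≠ v r2 := by
    intro r1 r2 hlt hEq
    have hmemP : (s + r1.val, s + r2.val) ∈ Pairs := by
      refine Finset.mem_filter.2 ⟨Finset.mem_product.2
        ⟨Finset.mem_range.2 (by omega), Finset.mem_range.2 ?_⟩, by omega, hEq⟩
      have := r2.isLt
      omega
    have := hmin _ hmemP
    have := r2.isLt
    omega
  have hvinj : Function.Injective v := by
    intro r1 r2 hEq
    rcases Nat.lt_trichotomy r1.val r2.val with h | h | h
    · exact absurd hEq (hvlt r1 r2 h)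
    · exact Fin.ext h
    · exact absurd hEq.symm (hvlt r2 r1 h)
  apply hnoevencycle
  refine ⟨m, v, by omega, Nat.even_iff.2 hmEven, hvinj, ?_⟩
  intro r
  have hrlt := r.isLt
  have hcases : r.val + 1 < m ∨ r.val + 1 = m := by omega
  have hnextval : (cyclicNext r).val = (r.val + 1) % m := rfl
  constructor
  · intro hEq
    rcases hcases with h | h
    · have hval : (cyclicNext r).val = r.val + 1 := by
        rw [hnextval, Nat.mod_eq_of_lt h]
      exact absurd (congrArg Fin.val (hvinj hEq)) (by omega)
    · have hval : (cyclicNext r).val = 0 := by rw [hnextval, h, Nat.mod_self]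
      have := congrArg Fin.val (hvinj hEq)
      omega
  · rcases hcases with h | h
    · have hval : (cyclicNext r).val = r.val + 1 := by
        rw [hnextval, Nat.mod_eq_of_lt h]
      have : v (cyclicNext r) = V (s + r.val + 1) := by
        simp only [hv]; congr 1; omega
      rw [this]
      exact hedge (s + r.val)
    · have hval : (cyclicNext r).val = 0 := by rw [hnextval, h, Nat.mod_self]
      have h1 : v (cyclicNext r) = V (s + r.val + 1) := by
        have h0 : v (cyclicNext r) = V s := by
          simp only [hv]; congr 1; omega
        rw [h0, hVst]
        congr 1
        omega
      rw [h1]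
      exact hedge (s + r.val)

variable (K)

lemma sfG_zero : sfG F (0 : Fin q →₀ ℕ) = 0 := by simp [sfG]

lemma sfDeg_zero : sfDeg (0 : Fin q →₀ ℕ) = 0 := by simp [sfDeg]

lemma lin_mem {a a'' : Fin n →₀ ℕ} {i j : Fin q} (h : a + sfInd (F i) = a'' + sfInd (F j)) :
    monomial (Finsupp.single i 1) (monomial a (1 : K)) -
      monomial (Finsupp.single j 1) (monomial a'' (1 : K)) ∈
      Ideal.span {g | g ∈ reesIdeal K F ∧ g.IsHomogeneous 1} := by
  apply Ideal.subset_span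
  constructor
  · show _ ∈ RingHom.ker _
    rw [RingHom.mem_ker]
    rw [map_sub, reesHom_monomial, reesHom_monomial, sfG_single, sfG_single,
      sfDeg_single, sfDeg_single, monomial_mul, monomial_mul, h, sub_self]
  · have h1 : ∀ k : Fin q, ((Finsupp.single k 1 : Fin q →₀ ℕ)).degree = 1 := by
      intro k
      exact Finsupp.degree_single k 1
    exact (isHomogeneous_monomial _ (h1 i)).sub (isHomogeneous_monomial _ (h1 j))

lemma reduce_step {d : ℕ}
    (hIH : ∀ (a a' : Fin n →₀ ℕ) (b b' : Fin q →₀ ℕ), sfDeg b = d → sfDeg b' = d →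
      a + sfG F b = a' + sfG F b' →
      monomial b (monomial a (1 : K)) - monomial b' (monomial a' (1 : K)) ∈
        Ideal.span {g | g ∈ reesIdeal K F ∧ g.IsHomogeneous 1})
    {a a' : Fin n →₀ ℕ} {b b' : Fin q →₀ ℕ} {i j : Fin q}
    (hi : i ∈ b.support) (hj : j ∈ b'.support)
    (hcov : ∀ x ∈ F j, x ∈ F i ∨ x ∈ a.support)
    (hdb : sfDeg b = d + 1) (hdb' : sfDeg b' = d + 1)
    (heq : a + sfG F b = a' + sfG F b') :
    monomial b (monomial a (1 : K)) - monomial b' (monomial a' (1 : K)) ∈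
      Ideal.span {g | g ∈ reesIdeal K F ∧ g.IsHomogeneous 1} := by
  classical
  have hble : Finsupp.single i 1 ≤ b :=
    Finsupp.single_le_iff.2 (Nat.one_le_iff_ne_zero.2 (Finsupp.mem_support_iff.1 hi))
  have hble' : Finsupp.single j 1 ≤ b' :=
    Finsupp.single_le_iff.2 (Nat.one_le_iff_ne_zero.2 (Finsupp.mem_support_iff.1 hj))
  have hcancel : (b - Finsupp.single i 1) + Finsupp.single i 1 = b :=
    tsub_add_cancel_of_le hble
  have hcancel' : (b' - Finsupp.single j 1) + Finsupp.single j 1 = b' :=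
    tsub_add_cancel_of_le hble'
  have hindle : sfInd (F j) ≤ a + sfInd (F i) := by
    rw [Finsupp.le_def]
    intro x
    rw [Finsupp.add_apply, sfInd_apply, sfInd_apply]
    by_cases hx : x ∈ F j
    · rw [if_pos hx]
      rcases hcov x hx with h | h
      · rw [if_pos h]; omega
      · have := Finsupp.mem_support_iff.1 h
        omega
    · rw [if_neg hx]; omega
  set a'' : Fin n →₀ ℕ := a + sfInd (F i) - sfInd (F j) with ha''
  have himg1 : a + sfInd (F i) = a'' + sfInd (F j) := (tsub_add_cancel_of_le hindle).symm
  have hk1 : sfG F b = sfG F (b - Finsupp.single i 1) + sfInd (F i) := by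
    conv_lhs => rw [← hcancel]
    rw [sfG_add, sfG_single]
  have hk1' : sfG F b' = sfG F (b' - Finsupp.single j 1) + sfInd (F j) := by
    conv_lhs => rw [← hcancel']
    rw [sfG_add, sfG_single]
  have hdegb1 : sfDeg (b - Finsupp.single i 1) = d := by
    have := sfDeg_add (b - Finsupp.single i 1) (Finsupp.single i 1)
    rw [hcancel, sfDeg_single] at this
    omega
  have hdegb1' : sfDeg (b' - Finsupp.single j 1) = d := by
    have := sfDeg_add (b' - Finsupp.single j 1) (Finsupp.single j 1)
    rw [hcancel', sfDeg_single] at this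
    omega
  have himg2 : a'' + sfG F (b - Finsupp.single i 1) = a' + sfG F (b' - Finsupp.single j 1) := by
    have step : (a'' + sfG F (b - Finsupp.single i 1)) + sfInd (F j)
        = (a' + sfG F (b' - Finsupp.single j 1)) + sfInd (F j) := by
      calc (a'' + sfG F (b - Finsupp.single i 1)) + sfInd (F j)
          = (a'' + sfInd (F j)) + sfG F (b - Finsupp.single i 1) := by abel
        _ = (a + sfInd (F i)) + sfG F (b - Finsupp.single i 1) := by rw [← himg1]
        _ = a + sfG F b := by rw [hk1]; abel
        _ = a' + sfG F b' := heq
        _ = (a' + sfG F (b' - Finsupp.single j 1)) + sfInd (F j) := by rw [hk1']; abel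
    exact add_right_cancel step
  have hident : monomial b (monomial a (1 : K)) - monomial b' (monomial a' (1 : K))
      = monomial (b - Finsupp.single i 1) (1 : MvPolynomial (Fin n) K) *
          (monomial (Finsupp.single i 1) (monomial a (1 : K)) -
            monomial (Finsupp.single j 1) (monomial a'' (1 : K)))
        + monomial (Finsupp.single j 1) (1 : MvPolynomial (Fin n) K) *
          (monomial (b - Finsupp.single i 1) (monomial a'' (1 : K)) -
            monomial (b' - Finsupp.single j 1) (monomial a' (1 : K))) := by
    simp only [mul_sub, monomial_mul, one_mul]
    rw [hcancel]
    rw [add_comm (b - Finsupp.single i 1) (Finsupp.single j 1)]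
    rw [add_comm (Finsupp.single j 1) (b' - Finsupp.single j 1), hcancel']
    ring
  rw [hident]
  refine Ideal.add_mem _ (Ideal.mul_mem_left _ _ (lin_mem K F himg1))
    (Ideal.mul_mem_left _ _ ?_)
  exact hIH a'' a' _ _ hdegb1 hdegb1' himg2

lemma bin_mem
    (hnoevencycle : ¬ ∃ (m : ℕ) (v : Fin m → Fin q), 3 ≤ m ∧ Even m ∧
        Function.Injective v ∧
        ∀ t : Fin m, v t ≠ v (cyclicNext t) ∧
          (F (v t) ∩ F (v (cyclicNext t))).Nonempty) :
    ∀ (d : ℕ) (a a' : Fin n →₀ ℕ) (b b' : Fin q →₀ ℕ), sfDeg b = d → sfDeg b' = d →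
      a + sfG F b = a' + sfG F b' →
      monomial b (monomial a (1 : K)) - monomial b' (monomial a' (1 : K)) ∈
        Ideal.span {g | g ∈ reesIdeal K F ∧ g.IsHomogeneous 1} := by
  intro d
  induction d with
  | zero =>
    intro a a' b b' hdb hdb' heq
    obtain rfl : b = 0 := sfDeg_eq_zero hdb
    obtain rfl : b' = 0 := sfDeg_eq_zero hdb'
    rw [sfG_zero, add_zero, add_zero] at heq
    rw [heq, sub_self]
    exact Ideal.zero_mem _
  | succ d ih =>
    intro a a' b b' hdb hdb' heq
    by_cases hshare : ∃ k, k ∈ b.support ∧ k ∈ b'.support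
    · obtain ⟨k, hk, hk'⟩ := hshare
      have hble : Finsupp.single k 1 ≤ b :=
        Finsupp.single_le_iff.2 (Nat.one_le_iff_ne_zero.2 (Finsupp.mem_support_iff.1 hk))
      have hble' : Finsupp.single k 1 ≤ b' :=
        Finsupp.single_le_iff.2 (Nat.one_le_iff_ne_zero.2 (Finsupp.mem_support_iff.1 hk'))
      have hcancel : (b - Finsupp.single k 1) + Finsupp.single k 1 = b :=
        tsub_add_cancel_of_le hble
      have hcancel' : (b' - Finsupp.single k 1) + Finsupp.single k 1 = b' :=
        tsub_add_cancel_of_le hble'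
      have hdeg1 : sfDeg (b - Finsupp.single k 1) = d := by
        have := sfDeg_add (b - Finsupp.single k 1) (Finsupp.single k 1)
        rw [hcancel, sfDeg_single] at this; omega
      have hdeg1' : sfDeg (b' - Finsupp.single k 1) = d := by
        have := sfDeg_add (b' - Finsupp.single k 1) (Finsupp.single k 1)
        rw [hcancel', sfDeg_single] at this; omega
      have himg : a + sfG F (b - Finsupp.single k 1) = a' + sfG F (b' - Finsupp.single k 1) := by
        have step : (a + sfG F (b - Finsupp.single k 1)) + sfInd (F k)
            = (a' + sfG F (b' - Finsupp.single k 1)) + sfInd (F k) := by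
          calc (a + sfG F (b - Finsupp.single k 1)) + sfInd (F k)
              = a + (sfG F (b - Finsupp.single k 1) + sfInd (F k)) := by abel
            _ = a + sfG F b := by
                rw [← sfG_single (F := F) k, ← sfG_add, hcancel]
            _ = a' + sfG F b' := heq
            _ = a' + (sfG F (b' - Finsupp.single k 1) + sfInd (F k)) := by
                rw [← sfG_single (F := F) k, ← sfG_add, hcancel']
            _ = (a' + sfG F (b' - Finsupp.single k 1)) + sfInd (F k) := by abel
        exact add_right_cancel step
      have hident : monomial b (monomial a (1 : K)) - monomial b' (monomial a' (1 : K))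
          = monomial (Finsupp.single k 1) (1 : MvPolynomial (Fin n) K) *
              (monomial (b - Finsupp.single k 1) (monomial a (1 : K)) -
                monomial (b' - Finsupp.single k 1) (monomial a' (1 : K))) := by
        simp only [mul_sub, monomial_mul, one_mul]
        rw [add_comm (Finsupp.single k 1) (b - Finsupp.single k 1), hcancel,
          add_comm (Finsupp.single k 1) (b' - Finsupp.single k 1), hcancel']
      rw [hident]
      exact Ideal.mul_mem_left _ _ (ih a a' _ _ hdeg1 hdeg1' himg)
    · have hdisj : Disjoint b.support b'.support :=
        Finset.disjoint_left.2 fun k hk hk' => hshare ⟨k, hk, hk'⟩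
      have hbne : b.support.Nonempty := by
        rw [Finsupp.support_nonempty_iff]
        intro h0
        rw [h0, sfDeg_zero] at hdb
        omega
      have hbne' : b'.support.Nonempty := by
        rw [Finsupp.support_nonempty_iff]
        intro h0
        rw [h0, sfDeg_zero] at hdb'
        omega
      rcases star_lemma F hnoevencycle hbne hbne' hdisj heq with
        ⟨i, hi, j, hj, hcov⟩ | ⟨j, hj, i, hi, hcov⟩
      · exact reduce_step K F ih hi hj hcov hdb hdb' heq
      · have hsym := reduce_step K F ih hj hi hcov hdb' hdb heq.symm
        have := neg_mem hsym
        rwa [neg_sub] at this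

lemma reesHom_apply (p : MvPolynomial (Fin q) (MvPolynomial (Fin n) K)) :
    reesHom K F p = ∑ b ∈ p.support,
      Polynomial.C (coeff b p * monomial (sfG F b) 1) * Polynomial.X ^ (sfDeg b) := by
  conv_lhs => rw [p.as_sum]
  rw [map_sum]
  exact Finset.sum_congr rfl fun b _ => reesHom_monomial F b (coeff b p)

lemma coeff_eqs {p : MvPolynomial (Fin q) (MvPolynomial (Fin n) K)}
    (hp : p ∈ reesIdeal K F) (d : ℕ) (μ : Fin n →₀ ℕ) :
    ∑ b ∈ p.support.filter (fun b => sfDeg b = d),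
      (if sfG F b ≤ μ then coeff (μ - sfG F b) (coeff b p) else 0) = 0 := by
  have h0 : reesHom K F p = 0 := hp
  rw [reesHom_apply] at h0
  have h1 := congrArg (fun P => Polynomial.coeff P d) h0
  simp only [Polynomial.finset_sum_coeff, Polynomial.coeff_C_mul, Polynomial.coeff_X_pow,
    Polynomial.coeff_zero, mul_ite, mul_one, mul_zero] at h1
  have h1' : ∑ b ∈ p.support.filter (fun b => sfDeg b = d),
      coeff b p * monomial (sfG F b) 1 = 0 := by
    have haux : (∑ x ∈ p.support, if d = sfDeg x then coeff x p * monomial (sfG F x) 1 else 0)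
        = ∑ b ∈ p.support.filter (fun b => sfDeg b = d), coeff b p * monomial (sfG F b) 1 := by
      rw [Finset.sum_filter]
      exact Finset.sum_congr rfl fun b _ => if_congr eq_comm rfl rfl
    rw [← haux, h1]
  have h2 := congrArg (MvPolynomial.coeff μ) h1'
  rw [coeff_sum] at h2
  simp only [coeff_zero] at h2
  calc ∑ b ∈ p.support.filter (fun b => sfDeg b = d),
        (if sfG F b ≤ μ then coeff (μ - sfG F b) (coeff b p) else 0)
      = ∑ x ∈ p.support.filter (fun b => sfDeg b = d),
        coeff μ (coeff x p * monomial (sfG F x) 1) := by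
        refine Finset.sum_congr rfl fun b _ => ?_
        rw [coeff_mul_monomial']
        split_ifs with h
        · rw [mul_one]
        · rfl
    _ = 0 := h2

theorem main_thm
    (hnoevencycle : ¬ ∃ (m : ℕ) (v : Fin m → Fin q), 3 ≤ m ∧ Even m ∧
        Function.Injective v ∧
        ∀ t : Fin m, v t ≠ v (cyclicNext t) ∧
          (F (v t) ∩ F (v (cyclicNext t))).Nonempty) :
    IsLinearType K F := by
  classical
  show reesIdeal K F = Ideal.span {g | g ∈ reesIdeal K F ∧ g.IsHomogeneous 1}
  refine le_antisymm ?_ (Ideal.span_le.2 fun g hg => hg.1)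
  intro p hp
  set D : Finset (Σ _ : (Fin q →₀ ℕ), (Fin n →₀ ℕ)) :=
    p.support.sigma (fun b => (coeff b p).support) with hD
  set e : (Σ _ : (Fin q →₀ ℕ), (Fin n →₀ ℕ)) → MvPolynomial (Fin q) (MvPolynomial (Fin n) K) :=
    fun x => monomial x.1 (monomial x.2 (1 : K)) with he
  set kf : (Σ _ : (Fin q →₀ ℕ), (Fin n →₀ ℕ)) → K :=
    fun x => coeff x.2 (coeff x.1 p) with hkf
  set sf : (Σ _ : (Fin q →₀ ℕ), (Fin n →₀ ℕ)) → (Fin n →₀ ℕ) × ℕ :=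
    fun x => (x.2 + sfG F x.1, sfDeg x.1) with hsf
  -- p as a sum
  have hsum : p = ∑ x ∈ D, kf x • e x := by
    conv_lhs => rw [p.as_sum]
    rw [Finset.sum_sigma]
    refine Finset.sum_congr rfl fun b hb => ?_
    conv_lhs => rw [(coeff b p).as_sum]
    rw [map_sum]
    refine Finset.sum_congr rfl fun a ha => ?_
    simp only [he, hkf]
    rw [smul_monomial, smul_monomial, smul_eq_mul, mul_one]
  -- fiber sums vanish
  have hfib : ∀ v : (Fin n →₀ ℕ) × ℕ, ∑ x ∈ D.filter (fun x => sf x = v), kf x = 0 := by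
    rintro ⟨μ, d⟩
    have hDf : D.filter (fun x => sf x = (μ, d)) =
        (p.support.filter (fun b => sfDeg b = d)).sigma
          (fun b => (coeff b p).support.filter (fun a => a + sfG F b = μ)) := by
      ext x
      simp only [Finset.mem_filter, Finset.mem_sigma, hsf, hD, Prod.mk.injEq]
      tauto
    rw [hDf, Finset.sum_sigma]
    have hinner : ∀ b ∈ p.support.filter (fun b => sfDeg b = d),
        ∑ a ∈ (coeff b p).support.filter (fun a => a + sfG F b = μ),
          coeff a (coeff b p)
        = (if sfG F b ≤ μ then coeff (μ - sfG F b) (coeff b p) else 0) := by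
      intro b _
      by_cases hle : sfG F b ≤ μ
      · rw [if_pos hle]
        have hiff : ∀ a : Fin n →₀ ℕ, a + sfG F b = μ ↔ a = μ - sfG F b := by
          intro a
          constructor
          · intro h; exact eq_tsub_of_add_eq h
          · intro h; rw [h, tsub_add_cancel_of_le hle]
        rw [Finset.filter_congr (fun a _ => by rw [hiff a]), Finset.filter_eq']
        split_ifs with hmem
        · rw [Finset.sum_singleton]
        · rw [Finset.sum_empty]
          exact (MvPolynomial.notMem_support_iff.1 hmem).symm
      · rw [if_neg hle]
        rw [Finset.filter_false_of_mem, Finset.sum_empty]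
        intro a _ hEq
        exact hle (by rw [← hEq]; exact le_add_self)
    rw [Finset.sum_congr rfl hinner]
    exact coeff_eqs K F hp d μ
  -- representative function
  set rep : (Fin n →₀ ℕ) × ℕ → (Σ _ : (Fin q →₀ ℕ), (Fin n →₀ ℕ)) :=
    fun v => if h : ∃ y ∈ D, sf y = v then h.choose else ⟨0, 0⟩ with hrepdef
  have hrepD : ∀ x ∈ D, rep (sf x) ∈ D ∧ sf (rep (sf x)) = sf x := by
    intro x hx
    have hex : ∃ y ∈ D, sf y = sf x := ⟨x, hx, rfl⟩
    simp only [hrepdef, dif_pos hex]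
    exact hex.choose_spec
  have hzero : ∑ x ∈ D, kf x • e (rep (sf x)) = 0 := by
    rw [← Finset.sum_fiberwise_of_maps_to
      (g := sf) (t := D.image sf) (fun x hx => Finset.mem_image_of_mem sf hx)]
    refine Finset.sum_eq_zero fun v _ => ?_
    have hcg : ∀ x ∈ D.filter (fun x => sf x = v),
        kf x • e (rep (sf x)) = kf x • e (rep v) := by
      intro x hx; rw [(Finset.mem_filter.1 hx).2]
    rw [Finset.sum_congr rfl hcg, ← Finset.sum_smul, hfib v, zero_smul]
  have hdecomp : p = ∑ x ∈ D, kf x • (e x - e (rep (sf x))) := by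
    calc p = (∑ x ∈ D, kf x • e x) - (∑ x ∈ D, kf x • e (rep (sf x))) := by
          rw [hzero, sub_zero]; exact hsum
      _ = ∑ x ∈ D, (kf x • e x - kf x • e (rep (sf x))) := (Finset.sum_sub_distrib _ _).symm
      _ = ∑ x ∈ D, kf x • (e x - e (rep (sf x))) :=
          Finset.sum_congr rfl fun x _ => (smul_sub _ _ _).symm
  rw [hdecomp]
  refine Ideal.sum_mem _ fun x hx => ?_
  obtain ⟨hrep1, hrep2⟩ := hrepD x hx
  have hdeg : sfDeg (rep (sf x)).1 = sfDeg x.1 := congrArg Prod.snd hrep2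
  have himg : x.2 + sfG F x.1 = (rep (sf x)).2 + sfG F (rep (sf x)).1 :=
    (congrArg Prod.fst hrep2).symm
  have hbinom := bin_mem K F hnoevencycle (sfDeg x.1) x.2 (rep (sf x)).2 x.1 (rep (sf x)).1
    rfl hdeg himg
  have hsm : kf x • (e x - e (rep (sf x)))
      = (algebraMap K (MvPolynomial (Fin q) (MvPolynomial (Fin n) K)) (kf x)) *
        (e x - e (rep (sf x))) := Algebra.smul_def _ _
  rw [hsm]
  exact Ideal.mul_mem_left _ _ hbinom

end Aux

theorem stmt17 {K : Type*} [Field K] {n q : ℕ}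
    (F : Fin q → Finset (Fin n)) (hF : IsFacetFamily F)
    (hnoevencycle : ¬ ∃ (m : ℕ) (v : Fin m → Fin q), 3 ≤ m ∧ Even m ∧
        Function.Injective v ∧
        ∀ t : Fin m, v t ≠ v (cyclicNext t) ∧
          (F (v t) ∩ F (v (cyclicNext t))).Nonempty) :
    IsLinearType K F :=
  main_thm K F hnoevencycle
end
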